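/- Let A be a Galois ring GR(2^n, r) with n ≥ 3. Then the multiplicative group 1 + 2A is isomorphic as a group to ℤ/2ℤ × ℤ/2^{n−2}ℤ × (ℤ/2^{n−1}ℤ)^{r−1}. -/

import Mathlib

set_option linter.unusedSectionVars false
set_option maxHeartbeats 1000000

lemma card_eq_card_range_mul {α β : Type*} [Finite α] (f : α → β) (m : ℕ)
    (hm : ∀ a : α, Nat.card {x | f x = f a} = m) :
    Nat.card α = Nat.card (Set.range f) * m := by
  classical
  haveI := Fintype.ofFinite α
  haveI : Fintype (Set.range f) := Set.fintypeRange f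
  let g : α → Set.range f := Set.rangeFactorization f
  have : Nat.card α = Nat.card (Σ b : Set.range f, {x // g x = b}) :=
    Nat.card_congr (Equiv.sigmaFiberEquiv g).symm
  rw [this]
  haveI : ∀ b : Set.range f, Fintype {x // g x = b} := fun b => by infer_instance
  rw [Nat.card_eq_fintype_card, Fintype.card_sigma]
  have hfib : ∀ b : Set.range f, Fintype.card {x // g x = b} = m := by
    rintro ⟨b, a, rfl⟩
    rw [← Nat.card_eq_fintype_card]
    have : {x // g x = ⟨f a, ⟨a, rfl⟩⟩} ≃ {x | f x = f a} :=
      Equiv.subtypeEquivRight (fun x => by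
        simp [g, Set.rangeFactorization, Subtype.ext_iff])
    rw [Nat.card_congr this, hm a]
  rw [Finset.sum_congr rfl (fun b _ => hfib b), Finset.sum_const, Finset.card_univ,
    Nat.card_eq_fintype_card, smul_eq_mul]

lemma card_coset {α : Type*} [AddGroup α] (P : Set α) (a : α) :
    Nat.card {x | x - a ∈ P} = Nat.card P :=
  Nat.card_congr ⟨fun x => ⟨x.1 - a, x.2⟩, fun y => ⟨y.1 + a, by simp [y.2]⟩,
    fun x => by simp, fun y => by simp⟩

open Multiset in
lemma multiset_sum_sub_step (s : Multiset ℕ) (k : ℕ) :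
    (s.map (fun e => e - k)).sum
      = (s.map (fun e => e - (k+1))).sum + (s.filter (fun e => k+1 ≤ e)).card := by
  classical
  induction s using Multiset.induction with
  | empty => simp
  | cons a s ih =>
    simp only [Multiset.map_cons, Multiset.sum_cons, Multiset.filter_cons, ih]
    by_cases h : k + 1 ≤ a
    · simp [h]; omega
    · simp [h]; omega

open Multiset in
lemma multiset_card_filter_le_eq (s t : Multiset ℕ)
    (h : ∀ k, (s.map (fun e => e - k)).sum = (t.map (fun e => e - k)).sum) :
    ∀ k, 1 ≤ k → (s.filter (fun e => k ≤ e)).card = (t.filter (fun e => k ≤ e)).card := by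
  classical
  rintro ⟨⟩ hk
  · omega
  next k =>
    have h1 := multiset_sum_sub_step s k
    have h2 := multiset_sum_sub_step t k
    have h3 := h k
    have h4 := h (k+1)
    omega

open Multiset in
lemma multiset_eq_of_sub_sums (s t : Multiset ℕ)
    (hs : ∀ e ∈ s, 0 < e) (ht : ∀ e ∈ t, 0 < e)
    (h : ∀ k, (s.map (fun e => e - k)).sum = (t.map (fun e => e - k)).sum) : s = t := by
  classical
  have key := multiset_card_filter_le_eq s t h
  ext a
  rcases Nat.eq_zero_or_pos a with rfl | ha
  · rw [Multiset.count_eq_zero.2 (fun hh => absurd (hs 0 hh) (by omega)),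
      Multiset.count_eq_zero.2 (fun hh => absurd (ht 0 hh) (by omega))]
  · have split : ∀ u : Multiset ℕ, (u.filter (fun e => a ≤ e)).card
        = Multiset.count a u + (u.filter (fun e => a+1 ≤ e)).card := by
      intro u
      rw [Multiset.count_eq_card_filter_eq]
      have : Multiset.filter (fun e => a ≤ e) u
          = Multiset.filter (fun e => a = e) u + Multiset.filter (fun e => a+1 ≤ e) u := by
        induction u using Multiset.induction with
        | empty => simp
        | cons b u ih =>
          simp only [Multiset.filter_cons, ih]
          by_cases h1 : a = b
          · subst h1
            have h2 : ¬ (a+1 ≤ a) := by omega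
            simp [Nat.le_refl, h2]
          · by_cases h2 : a ≤ b
            · have h3 : a + 1 ≤ b := by omega
              simp [h1, h2, h3]
            · have h3 : ¬ (a + 1 ≤ b) := by omega
              simp [h1, h2, h3]
      rw [this, Multiset.card_add]
    have e1 := split s
    have e2 := split t
    have k1 := key a ha
    have k2 := key (a+1) (by omega)
    omega

lemma exists_equiv_of_multiset_map_eq {ι κ : Type} [Fintype ι] [Fintype κ]
    (e : ι → ℕ) (f : κ → ℕ)
    (h : Multiset.map e Finset.univ.val = Multiset.map f Finset.univ.val) :
    ∃ σ : ι ≃ κ, ∀ i, f (σ i) = e i := by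
  classical
  have hcard : ∀ v : ℕ, Fintype.card {i // e i = v} = Fintype.card {j // f j = v} := by
    intro v
    have h1 : Multiset.count v (Multiset.map e Finset.univ.val)
        = Multiset.count v (Multiset.map f Finset.univ.val) := by rw [h]
    rw [Multiset.count_map, Multiset.count_map] at h1
    have conv1 : ∀ {α : Type} [Fintype α] (g : α → ℕ),
        Fintype.card {i // g i = v} = Multiset.card (Multiset.filter (fun a => v = g a) Finset.univ.val) := by
      intro α _ g
      rw [Fintype.card_subtype, Finset.card_def, Finset.filter_val]
      congr 1
      apply Multiset.filter_congr
      intro x _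
      constructor <;> (intro hh; omega)
    rw [conv1 e, conv1 f, h1]
  let F : ∀ v : ℕ, {i // e i = v} ≃ {j // f j = v} := fun v => Fintype.equivOfCardEq (hcard v)
  refine ⟨(Equiv.sigmaFiberEquiv e).symm.trans
    ((Equiv.sigmaCongrRight F).trans (Equiv.sigmaFiberEquiv f)), fun i => ?_⟩
  simp only [Equiv.trans_apply, Equiv.sigmaFiberEquiv]
  have : (Equiv.sigmaCongrRight F) ((⟨fun x => ↑x.2, fun x => ⟨e x, x, rfl⟩,
      fun ⟨_, _, rfl⟩ => rfl, fun _ => rfl⟩ : (Σ y : ℕ, {x // e x = y}) ≃ ι).symm i)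
      = ⟨e i, F (e i) ⟨i, rfl⟩⟩ := rfl
  rw [this]
  exact (F (e i) ⟨i, rfl⟩).2

/-- reindexing a product of monoids -/
def MulEquiv.myPiCongrLeft {ι κ : Type*} (σ : ι ≃ κ) (M : κ → Type*) [∀ j, Mul (M j)] :
    ((i : ι) → M (σ i)) ≃* ((j : κ) → M j) :=
  { Equiv.piCongrLeft M σ with
    map_mul' := by
      intro g h
      funext j
      obtain ⟨i, rfl⟩ : ∃ i, σ i = j := ⟨σ.symm j, by simp⟩
      show (Equiv.piCongrLeft M σ) (g * h) (σ i) = _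
      rw [Equiv.piCongrLeft_apply_apply]
      show _ = (Equiv.piCongrLeft M σ) g (σ i) * (Equiv.piCongrLeft M σ) h (σ i)
      rw [Equiv.piCongrLeft_apply_apply, Equiv.piCongrLeft_apply_apply]
      rfl }

def zmodAddCongr {a b : ℕ} (h : a = b) : ZMod a ≃+ ZMod b := by subst h; exact AddEquiv.refl _

/-- main reindexing equiv for products of `Multiplicative (ZMod (2^e))`. -/
noncomputable def piZModCongr {ι κ : Type*} [Fintype ι] [Fintype κ] (e : ι → ℕ) (f : κ → ℕ)
    (σ : ι ≃ κ) (h : ∀ i, f (σ i) = e i) :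
    ((i : ι) → Multiplicative (ZMod (2 ^ e i))) ≃* ((j : κ) → Multiplicative (ZMod (2 ^ f j))) :=
  (MulEquiv.piCongrRight (fun i => AddEquiv.toMultiplicative
      (zmodAddCongr (by rw [h i]) : ZMod (2 ^ e i) ≃+ ZMod (2 ^ f (σ i))))).trans
    (MulEquiv.myPiCongrLeft σ (fun j => Multiplicative (ZMod (2 ^ f j))))

/-- transport of pow-range card along a MulEquiv -/
lemma card_range_pow_congr {G H : Type*} [Monoid G] [Monoid H] (e : G ≃* H) (m : ℕ) :
    Nat.card (Set.range fun x : G => x ^ m) = Nat.card (Set.range fun x : H => x ^ m) := by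
  apply Nat.card_congr
  refine ⟨fun y => ⟨e y.1, ?_⟩, fun y => ⟨e.symm y.1, ?_⟩, fun y => ?_, fun y => ?_⟩
  · obtain ⟨x, hx⟩ := y.2; exact ⟨e x, by show (e x) ^ m = _; rw [← map_pow]; exact congrArg _ hx⟩
  · obtain ⟨x, hx⟩ := y.2; exact ⟨e.symm x, by show (e.symm x) ^ m = _; rw [← map_pow]; exact congrArg _ hx⟩
  · simp
  · simp

/-- range of a pointwise map on a Pi type -/
noncomputable def rangePiMapEquiv {ι : Type*} {M : ι → Type*} (f : ∀ i, M i → M i) :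
    ↥(Set.range fun g : (∀ i, M i) => fun i => f i (g i)) ≃ ∀ i, ↥(Set.range (f i)) where
  toFun y := fun i => ⟨y.1 i, by obtain ⟨g, hg⟩ := y.2; exact ⟨g i, congrFun hg i⟩⟩
  invFun F := ⟨fun i => (F i).1, ⟨fun i => (F i).2.choose, funext fun i => (F i).2.choose_spec⟩⟩
  left_inv y := Subtype.ext rfl
  right_inv F := funext fun i => Subtype.ext rfl

/-- card of pow-range on `Multiplicative (ZMod N)` -/
lemma card_range_pow_multiplicative_zmod (N m : ℕ) (hN : N ≠ 0) :
    Nat.card (Set.range fun x : Multiplicative (ZMod N) => x ^ m) = N / N.gcd m := by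
  haveI : NeZero N := ⟨hN⟩
  have h1 : Nat.card (Set.range fun x : Multiplicative (ZMod N) => x ^ m)
      = Nat.card (Set.range fun x : ZMod N => m • x) := by
    apply Nat.card_congr
    refine ⟨fun y => ⟨y.1.toAdd, ?_⟩, fun y => ⟨Multiplicative.ofAdd y.1, ?_⟩,
      fun y => by simp, fun y => by simp⟩
    · obtain ⟨x, hx⟩ := y.2; exact ⟨x.toAdd, by rw [← hx]; rfl⟩
    · obtain ⟨x, hx⟩ := y.2; exact ⟨Multiplicative.ofAdd x, by rw [← hx]; rfl⟩
  rw [h1]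
  have h2 : (Set.range fun x : ZMod N => m • x) = (AddSubgroup.zmultiples (m : ZMod N) : Set (ZMod N)) := by
    ext y
    constructor
    · rintro ⟨x, rfl⟩
      show m • x ∈ AddSubgroup.zmultiples (m : ZMod N)
      refine ⟨(x.val : ℤ), ?_⟩
      show (x.val : ℤ) • (m : ZMod N) = m • x
      rw [zsmul_eq_mul, nsmul_eq_mul]
      push_cast
      rw [ZMod.natCast_val, ZMod.cast_id, mul_comm]
    · rintro ⟨k, rfl⟩
      refine ⟨((k : ℤ) : ZMod N), ?_⟩
      show m • ((k : ℤ) : ZMod N) = (k : ℤ) • (m : ZMod N)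
      rw [zsmul_eq_mul, nsmul_eq_mul, mul_comm]
  rw [h2]
  rw [show Nat.card (AddSubgroup.zmultiples (m : ZMod N) : Set (ZMod N)) = Nat.card (AddSubgroup.zmultiples (m : ZMod N)) from rfl]
  rw [Nat.card_zmultiples, ZMod.addOrderOf_coe m hN]

lemma two_pow_div_gcd (e k : ℕ) : 2 ^ e / Nat.gcd (2 ^ e) (2 ^ k) = 2 ^ (e - k) := by
  rcases le_total e k with h | h
  · rw [Nat.gcd_eq_left (Nat.pow_dvd_pow 2 h), Nat.div_self ((by positivity : 0 < 2 ^ e)),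
      Nat.sub_eq_zero_of_le h, pow_zero]
  · rw [Nat.gcd_eq_right (Nat.pow_dvd_pow 2 h), Nat.pow_div h (by norm_num)]

lemma card_range_pow_pi {ι : Type} [Fintype ι] (ε : ι → ℕ) (k : ℕ) :
    Nat.card (Set.range fun g : ((i : ι) → Multiplicative (ZMod (2 ^ ε i))) => g ^ 2 ^ k)
      = 2 ^ (∑ i, (ε i - k)) := by
  have hfun : (fun g : ((i : ι) → Multiplicative (ZMod (2 ^ ε i))) => g ^ 2 ^ k)
      = fun g => fun i => (g i) ^ 2 ^ k := rfl
  rw [hfun, Nat.card_congr (rangePiMapEquiv (fun i => fun x : Multiplicative (ZMod (2 ^ ε i)) => x ^ 2 ^ k)),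
    Nat.card_pi]
  rw [Finset.prod_congr rfl (fun i _ => ?_), Finset.prod_pow_eq_pow_sum]
  rw [card_range_pow_multiplicative_zmod _ _ (by positivity), two_pow_div_gcd]

lemma master_two_group {G H : Type} [CommGroup G] [CommGroup H] [Finite G] [Finite H] {m : ℕ}
    (hG : Nat.card G = 2 ^ m)
    (h : ∀ k : ℕ, Nat.card (Set.range fun x : G => x ^ 2 ^ k)
      = Nat.card (Set.range fun x : H => x ^ 2 ^ k)) :
    Nonempty (G ≃* H) := by
  classical
  have hH : Nat.card H = 2 ^ m := by
    have h0 := h 0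
    have hrangeG : (Set.range fun x : G => x ^ 2 ^ 0) = Set.univ := by
      ext x; simpa using ⟨x, by simp⟩
    have hrangeH : (Set.range fun x : H => x ^ 2 ^ 0) = Set.univ := by
      ext x; simpa using ⟨x, by simp⟩
    rw [hrangeG, hrangeH, Nat.card_univ, Nat.card_univ] at h0
    rw [← h0, hG]
  obtain ⟨ι, hι, nG, hnG, ⟨eG⟩⟩ := CommGroup.equiv_prod_multiplicative_zmod_of_finite G
  obtain ⟨κ, hκ, nH, hnH, ⟨eH⟩⟩ := CommGroup.equiv_prod_multiplicative_zmod_of_finite H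
  -- each nG i is a power of 2
  have hdvdG : ∀ i, nG i ∣ 2 ^ m := by
    intro i
    rw [← hG, Nat.card_congr eG.toEquiv, Nat.card_pi]
    have : ∀ j : ι, Nat.card (Multiplicative (ZMod (nG j))) = nG j := fun j =>
      (Nat.card_congr Multiplicative.ofAdd.symm).trans (Nat.card_zmod _)
    rw [Finset.prod_congr rfl (fun j _ => this j)]
    exact Finset.dvd_prod_of_mem _ (Finset.mem_univ i)
  have hdvdH : ∀ j, nH j ∣ 2 ^ m := by
    intro j
    rw [← hH, Nat.card_congr eH.toEquiv, Nat.card_pi]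
    have : ∀ i : κ, Nat.card (Multiplicative (ZMod (nH i))) = nH i := fun i =>
      (Nat.card_congr Multiplicative.ofAdd.symm).trans (Nat.card_zmod _)
    rw [Finset.prod_congr rfl (fun i _ => this i)]
    exact Finset.dvd_prod_of_mem _ (Finset.mem_univ j)
  have hexpG : ∀ i, ∃ e, nG i = 2 ^ e :=
    fun i => by obtain ⟨e, _, he⟩ := (Nat.dvd_prime_pow Nat.prime_two).1 (hdvdG i); exact ⟨e, he⟩
  have hexpH : ∀ j, ∃ e, nH j = 2 ^ e :=
    fun j => by obtain ⟨e, _, he⟩ := (Nat.dvd_prime_pow Nat.prime_two).1 (hdvdH j); exact ⟨e, he⟩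
  set εG : ι → ℕ := fun i => (hexpG i).choose with hεG
  set εH : κ → ℕ := fun j => (hexpH j).choose with hεH
  have hεGe : ∀ i, nG i = 2 ^ εG i := fun i => (hexpG i).choose_spec
  have hεHe : ∀ j, nH j = 2 ^ εH j := fun j => (hexpH j).choose_spec
  have hεGpos : ∀ i, 1 ≤ εG i := by
    intro i
    by_contra hc
    have h0 : εG i = 0 := by omega
    have h2 := hnG i
    rw [hεGe i, h0, pow_zero] at h2
    omega
  have hεHpos : ∀ j, 1 ≤ εH j := by
    intro j
    by_contra hc
    have h0 : εH j = 0 := by omega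
    have h2 := hnH j
    rw [hεHe j, h0, pow_zero] at h2
    omega
  let eG' : G ≃* ((i : ι) → Multiplicative (ZMod (2 ^ εG i))) :=
    eG.trans (MulEquiv.piCongrRight fun i => AddEquiv.toMultiplicative (zmodAddCongr (hεGe i)))
  let eH' : H ≃* ((j : κ) → Multiplicative (ZMod (2 ^ εH j))) :=
    eH.trans (MulEquiv.piCongrRight fun j => AddEquiv.toMultiplicative (zmodAddCongr (hεHe j)))
  have hsum : ∀ k : ℕ, (∑ i, (εG i - k)) = (∑ j, (εH j - k)) := by
    intro k
    have h1 := ((card_range_pow_congr eG' (2 ^ k)).symm.trans ((h k).trans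
      (card_range_pow_congr eH' (2 ^ k))))
    rw [card_range_pow_pi, card_range_pow_pi] at h1
    exact Nat.pow_right_injective (le_refl 2) h1
  have hms : Multiset.map εG Finset.univ.val = Multiset.map εH Finset.univ.val := by
    apply multiset_eq_of_sub_sums
    · intro e he
      obtain ⟨i, _, rfl⟩ := Multiset.mem_map.1 he
      exact hεGpos i
    · intro e he
      obtain ⟨j, _, rfl⟩ := Multiset.mem_map.1 he
      exact hεHpos j
    · intro k
      have e1 : ((Multiset.map εG Finset.univ.val).map (fun e => e - k)).sum
          = ∑ i, (εG i - k) := by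
        rw [Multiset.map_map]; rfl
      have e2 : ((Multiset.map εH Finset.univ.val).map (fun e => e - k)).sum
          = ∑ j, (εH j - k) := by
        rw [Multiset.map_map]; rfl
      rw [e1, e2]
      exact hsum k
  obtain ⟨σ, hσ⟩ := exists_equiv_of_multiset_map_eq εG εH hms
  exact ⟨eG'.trans ((piZModCongr εG εH σ hσ).trans eH'.symm)⟩

/-- The subgroup `1 + pA` of the unit group of `A`, consisting of the units of the
form `1 + p * a`. -/
def onePlusP (p : ℕ) (A : Type) [CommRing A] : Subgroup Aˣ where
  carrier := {u : Aˣ | ∃ a : A, (u : A) = 1 + p * a}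
  one_mem' := ⟨0, by simp⟩
  mul_mem' := by
    rintro u v ⟨a, ha⟩ ⟨b, hb⟩
    exact ⟨a + b + p * a * b, by push_cast; rw [ha, hb]; ring⟩
  inv_mem' := by
    rintro u ⟨a, ha⟩
    refine ⟨-(a * (↑u⁻¹ : A)), ?_⟩
    have h1 : (↑u⁻¹ : A) * (u : A) = 1 := u.inv_mul
    calc (↑u⁻¹ : A) = (↑u⁻¹ : A) * (1 + p * a) - p * a * (↑u⁻¹ : A) := by ring
    _ = 1 + (p : A) * -(a * (↑u⁻¹ : A)) := by rw [← ha, h1]; ring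

section GR
variable {n r : ℕ} {A : Type} [CommRing A] [Fintype A] [IsLocalRing A]

/-- The set `2^j A`. -/
def Kset (A : Type) [CommRing A] (j : ℕ) : Set A := {x | ∃ a, x = 2 ^ j * a}

lemma Kset_mono {j j' : ℕ} (h : j ≤ j') : Kset A j' ⊆ Kset A j := by
  rintro x ⟨a, rfl⟩
  exact ⟨2 ^ (j' - j) * a, by rw [← mul_assoc, ← pow_add]; congr 2; omega⟩

lemma Kset_zero_mem (j : ℕ) : (0 : A) ∈ Kset A j := ⟨0, by ring⟩

lemma Kset_add {j : ℕ} {x y : A} (hx : x ∈ Kset A j) (hy : y ∈ Kset A j) : x + y ∈ Kset A j := by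
  obtain ⟨a, rfl⟩ := hx; obtain ⟨b, rfl⟩ := hy; exact ⟨a + b, by ring⟩

lemma Kset_sub {j : ℕ} {x y : A} (hx : x ∈ Kset A j) (hy : y ∈ Kset A j) : x - y ∈ Kset A j := by
  obtain ⟨a, rfl⟩ := hx; obtain ⟨b, rfl⟩ := hy; exact ⟨a - b, by ring⟩

lemma two_pow_zero_iff (hn : 1 ≤ n) (hchar : CharP A (2 ^ n)) (m : ℕ) :
    (2 : A) ^ m = 0 ↔ n ≤ m := by
  have : (2 : A) ^ m = ((2 ^ m : ℕ) : A) := by push_cast; ring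
  rw [this, CharP.cast_eq_zero_iff A (2 ^ n) (2 ^ m)]
  exact Nat.pow_dvd_pow_iff_le_right Nat.one_lt_two

lemma isUnit_of_not_mem_K1 (hmax : IsLocalRing.maximalIdeal A = Ideal.span {(2 : A)})
    {x : A} (hx : x ∉ Kset A 1) : IsUnit x := by
  by_contra h
  have h1 : x ∈ IsLocalRing.maximalIdeal A := h
  rw [hmax, Ideal.mem_span_singleton] at h1
  obtain ⟨c, hc⟩ := h1
  exact hx ⟨c, by rw [hc]; ring⟩

lemma isUnit_one_add_two (hmax : IsLocalRing.maximalIdeal A = Ideal.span {(2 : A)})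
    (a : A) : IsUnit (1 + 2 * a) := by
  apply isUnit_of_not_mem_K1 hmax
  rintro ⟨c, hc⟩
  have h1 : (1 : A) ∈ Ideal.span {(2 : A)} := by
    rw [Ideal.mem_span_singleton]
    exact ⟨c - a, by rw [mul_sub]; rw [show (2:A)^1 * c = 2 * c by ring] at hc; linear_combination hc⟩
  have h3 : Ideal.span {(2 : A)} = ⊤ := (Ideal.eq_top_iff_one _).2 h1
  have h4 : IsLocalRing.maximalIdeal A = ⊤ := by rw [hmax, h3]
  exact (IsLocalRing.maximalIdeal.isMaximal A).ne_top h4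

lemma isUnit_one_add_two_pow (hmax : IsLocalRing.maximalIdeal A = Ideal.span {(2 : A)})
    {j : ℕ} (hj : 1 ≤ j) (a : A) : IsUnit (1 + 2 ^ j * a) := by
  have : 1 + 2 ^ j * a = 1 + 2 * (2 ^ (j - 1) * a) := by
    rw [← mul_assoc]; congr 2
    rw [← pow_succ']; congr 1; omega
  rw [this]
  exact isUnit_one_add_two hmax _

lemma exists_unit_decomp (hn : 1 ≤ n) (hchar : CharP A (2 ^ n))
    (hmax : IsLocalRing.maximalIdeal A = Ideal.span {(2 : A)})
    {x : A} (hx : x ≠ 0) : ∃ k, k < n ∧ ∃ u, IsUnit u ∧ x = 2 ^ k * u := by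
  classical
  have hex : ∃ j, x ∉ Kset A j := by
    refine ⟨n, ?_⟩
    rintro ⟨a, ha⟩
    rw [(two_pow_zero_iff hn hchar n).2 le_rfl, zero_mul] at ha
    exact hx ha
  set j := Nat.find hex with hj
  have hjn : x ∉ Kset A j := Nat.find_spec hex
  have hj1 : 1 ≤ j := by
    rcases Nat.eq_zero_or_pos j with h0 | h
    · exact absurd (⟨x, by rw [h0]; ring⟩ : x ∈ Kset A j) hjn
    · exact h
  have hmem : x ∈ Kset A (j - 1) := by
    by_contra hc
    have : j ≤ j - 1 := Nat.find_le hc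
    omega
  obtain ⟨u, hu⟩ := hmem
  have hunit : IsUnit u := by
    apply isUnit_of_not_mem_K1 hmax
    rintro ⟨c, hc⟩
    apply hjn
    refine ⟨c, ?_⟩
    rw [hu, hc]
    rw [← mul_assoc, ← pow_add]
    congr 2
    omega
  refine ⟨j - 1, ?_, u, hunit, hu⟩
  -- j - 1 < n
  by_contra hcon
  have hjn' : n ≤ j - 1 := by omega
  apply hx
  have hxn : x ∈ Kset A n := Kset_mono hjn' ⟨u, hu⟩
  obtain ⟨a, ha⟩ := hxn
  rw [ha, (two_pow_zero_iff hn hchar n).2 le_rfl, zero_mul]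

lemma ann_pow (hn : 1 ≤ n) (hchar : CharP A (2 ^ n))
    (hmax : IsLocalRing.maximalIdeal A = Ideal.span {(2 : A)})
    {k : ℕ} (hk : k ≤ n) (x : A) : 2 ^ k * x = 0 ↔ x ∈ Kset A (n - k) := by
  constructor
  · intro h
    rcases eq_or_ne x 0 with rfl | hx
    · exact Kset_zero_mem _
    obtain ⟨j, hjn, u, hu, rfl⟩ := exists_unit_decomp hn hchar hmax hx
    have h2 : (2 : A) ^ (k + j) * u = 0 := by rw [pow_add, mul_assoc]; exact h
    have h3 : (2 : A) ^ (k + j) = 0 := by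
      obtain ⟨v, hv⟩ := hu
      calc (2:A)^(k+j) = (2:A)^(k+j) * u * ↑v⁻¹ := by rw [← hv, Units.mul_inv_cancel_right]
      _ = 0 := by rw [h2, zero_mul]
    have h4 : n ≤ k + j := (two_pow_zero_iff hn hchar _).1 h3
    exact Kset_mono (by omega) ⟨u, rfl⟩
  · rintro ⟨a, rfl⟩
    rw [← mul_assoc, ← pow_add, show k + (n - k) = n by omega,
      (two_pow_zero_iff hn hchar n).2 le_rfl, zero_mul]

lemma Kset_one_eq (hmax : IsLocalRing.maximalIdeal A = Ideal.span {(2 : A)}) :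
    (IsLocalRing.maximalIdeal A : Set A) = Kset A 1 := by
  rw [hmax]
  ext x
  rw [SetLike.mem_coe, Ideal.mem_span_singleton]
  constructor
  · rintro ⟨c, rfl⟩; exact ⟨c, by ring⟩
  · rintro ⟨c, rfl⟩; exact ⟨c, by ring⟩

lemma cardA_eq_residue (hmax : IsLocalRing.maximalIdeal A = Ideal.span {(2 : A)})
    (hres : Nat.card (IsLocalRing.ResidueField A) = 2 ^ r) :
    Nat.card A = 2 ^ r * Nat.card (Kset A 1) := by
  have key := card_eq_card_range_mul (fun a : A => Ideal.Quotient.mk (IsLocalRing.maximalIdeal A) a)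
    (Nat.card (Kset A 1)) (fun a => ?_)
  · rw [key]
    congr 1
    rw [Set.range_eq_univ.2 Ideal.Quotient.mk_surjective, Nat.card_univ]
    exact hres
  · have hset : {x : A | Ideal.Quotient.mk (IsLocalRing.maximalIdeal A) x
        = Ideal.Quotient.mk (IsLocalRing.maximalIdeal A) a} = {x | x - a ∈ Kset A 1} := by
      ext x
      rw [Set.mem_setOf_eq, Set.mem_setOf_eq, Ideal.Quotient.eq, ← Kset_one_eq hmax,
        SetLike.mem_coe]
    rw [hset, card_coset]

lemma cardA_eq_ann (hn : 1 ≤ n) (hchar : CharP A (2 ^ n))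
    (hmax : IsLocalRing.maximalIdeal A = Ideal.span {(2 : A)})
    {k : ℕ} (hk : k ≤ n) :
    Nat.card A = Nat.card (Kset A k) * Nat.card (Kset A (n - k)) := by
  have key := card_eq_card_range_mul (fun a : A => 2 ^ k * a)
    (Nat.card (Kset A (n - k))) (fun a => ?_)
  · rw [key]
    have hrange : (Set.range fun a : A => 2 ^ k * a) = Kset A k := by
      ext x
      constructor
      · rintro ⟨b, rfl⟩; exact ⟨b, rfl⟩
      · rintro ⟨b, rfl⟩; exact ⟨b, rfl⟩
    rw [hrange]
  · have hset : {x : A | 2 ^ k * x = 2 ^ k * a} = {x | x - a ∈ Kset A (n - k)} := by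
      ext x
      rw [Set.mem_setOf_eq, Set.mem_setOf_eq, ← ann_pow hn hchar hmax hk, mul_sub,
        sub_eq_zero]
    rw [hset, card_coset]

lemma card_Kset_step (hn : 1 ≤ n) (hchar : CharP A (2 ^ n))
    (hmax : IsLocalRing.maximalIdeal A = Ideal.span {(2 : A)})
    {k : ℕ} (hk : k < n) :
    Nat.card (Kset A k) = Nat.card (Kset A (k + 1)) * Nat.card (Kset A (n - 1)) := by
  have key := card_eq_card_range_mul (fun x : ↥(Kset A k) => 2 * (x : A))
    (Nat.card (Kset A (n - 1))) (fun a => ?_)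
  · rw [key]
    have hrange : (Set.range fun x : ↥(Kset A k) => 2 * (x : A)) = Kset A (k + 1) := by
      ext x
      constructor
      · rintro ⟨⟨y, b, rfl⟩, rfl⟩; exact ⟨b, by ring⟩
      · rintro ⟨b, rfl⟩
        exact ⟨⟨2 ^ k * b, ⟨b, rfl⟩⟩, by show (2:A) * (2^k * b) = 2^(k+1) * b; ring⟩
    rw [hrange]
  · have hset : {x : ↥(Kset A k) | 2 * (x : A) = 2 * (a : A)}
        = {x : ↥(Kset A k) | (x : A) - (a : A) ∈ Kset A (n - 1)} := by
      ext x
      rw [Set.mem_setOf_eq, Set.mem_setOf_eq]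
      have := ann_pow (k := 1) hn hchar hmax (by omega) ((x : A) - (a : A))
      rw [pow_one] at this
      rw [← this, mul_sub, sub_eq_zero]
    rw [hset]
    apply Nat.card_congr
    refine ⟨fun x => ⟨(x : ↥(Kset A k)).1 - (a : A), x.2⟩,
      fun y => ⟨⟨(a : A) + (y : A), Kset_add a.2 (Kset_mono (by omega) y.2)⟩, ?_⟩,
      fun x => ?_, fun y => ?_⟩
    · show ((a : A) + (y : A)) - (a : A) ∈ Kset A (n - 1)
      rw [add_sub_cancel_left]
      exact y.2
    · apply Subtype.ext; apply Subtype.ext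
      show (a : A) + ((x : ↥(Kset A k)).1 - (a : A)) = _
      ring
    · apply Subtype.ext
      show ((a : A) + (y : A)) - (a : A) = (y : A)
      ring

lemma card_Kset_n (hn : 1 ≤ n) (hchar : CharP A (2 ^ n)) :
    Nat.card (Kset A n) = 1 := by
  have : Kset A n = {(0 : A)} := by
    ext x
    constructor
    · rintro ⟨a, rfl⟩
      rw [(two_pow_zero_iff hn hchar n).2 le_rfl, zero_mul]
      rfl
    · rintro rfl
      exact Kset_zero_mem _
  rw [this]
  simp

lemma card_Kset_pos (j : ℕ) : 0 < Nat.card (Kset A j) := by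
  haveI : Nonempty ↥(Kset A j) := ⟨⟨0, Kset_zero_mem _⟩⟩
  exact Nat.card_pos

lemma card_Kset_pred (hn : 1 ≤ n) (hchar : CharP A (2 ^ n))
    (hmax : IsLocalRing.maximalIdeal A = Ideal.span {(2 : A)})
    (hres : Nat.card (IsLocalRing.ResidueField A) = 2 ^ r) :
    Nat.card (Kset A (n - 1)) = 2 ^ r := by
  have h1 := cardA_eq_residue (r := r) hmax hres
  have h2 := cardA_eq_ann (k := 1) hn hchar hmax (by omega)
  rw [h1] at h2
  have hpos := card_Kset_pos (A := A) 1
  rw [mul_comm (2 ^ r) _] at h2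
  exact (Nat.eq_of_mul_eq_mul_left hpos h2).symm

lemma card_Kset (hn : 1 ≤ n) (hchar : CharP A (2 ^ n))
    (hmax : IsLocalRing.maximalIdeal A = Ideal.span {(2 : A)})
    (hres : Nat.card (IsLocalRing.ResidueField A) = 2 ^ r) :
    ∀ j, j ≤ n → Nat.card (Kset A (n - j)) = 2 ^ (j * r) := by
  intro j
  induction j with
  | zero => intro _; simpa using card_Kset_n hn hchar
  | succ j ih =>
    intro hj
    have hk : n - (j + 1) < n := by omega
    have step := card_Kset_step hn hchar hmax hk
    rw [show n - (j+1) + 1 = n - j by omega] at step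
    rw [step, ih (by omega), card_Kset_pred hn hchar hmax hres, ← pow_add]
    congr 1
    ring

lemma card_Kset' (hn : 1 ≤ n) (hchar : CharP A (2 ^ n))
    (hmax : IsLocalRing.maximalIdeal A = Ideal.span {(2 : A)})
    (hres : Nat.card (IsLocalRing.ResidueField A) = 2 ^ r) :
    ∀ k, k ≤ n → Nat.card (Kset A k) = 2 ^ ((n - k) * r) := by
  intro k hk
  have := card_Kset hn hchar hmax hres (n - k) (by omega)
  rw [show n - (n - k) = k by omega] at this
  exact this

lemma cardA (hn : 1 ≤ n) (hchar : CharP A (2 ^ n))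
    (hmax : IsLocalRing.maximalIdeal A = Ideal.span {(2 : A)})
    (hres : Nat.card (IsLocalRing.ResidueField A) = 2 ^ r) :
    Nat.card A = 2 ^ (n * r) := by
  have h0 : Kset A 0 = Set.univ := by
    ext x; simp [Kset]
  have := card_Kset' hn hchar hmax hres 0 (by omega)
  rw [h0, Nat.card_univ] at this
  simpa using this

/-- The Artin-Schreier set `{a + a^2}`. -/
def Sset (A : Type) [CommRing A] : Set A := {x | ∃ a, x = a + a ^ 2}

lemma mem_K1_not_unit (hmax : IsLocalRing.maximalIdeal A = Ideal.span {(2 : A)})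
    {x : A} (hx : x ∈ Kset A 1) : ¬IsUnit x := by
  have : x ∈ (IsLocalRing.maximalIdeal A : Set A) := by rw [Kset_one_eq hmax]; exact hx
  exact this

lemma unit_cancel {x : A} {w : A} (hw : IsUnit w) (h : x * w = 0) : x = 0 := by
  obtain ⟨u, rfl⟩ := hw
  calc x = x * ↑u * ↑u⁻¹ := by rw [mul_assoc]; simp
  _ = 0 := by rw [h, zero_mul]

lemma Sset_add_two (hmax : IsLocalRing.maximalIdeal A = Ideal.span {(2 : A)})
    {s : A} (hs : s ∈ Sset A) (c : A) : s + 2 * c ∈ Sset A := by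
  obtain ⟨a, rfl⟩ := hs
  set ψ : A → A := fun x => x + 2 * a * x + 2 * x ^ 2 with hψ
  have hinj : Function.Injective ψ := by
    intro x y hxy
    have h1 : (x - y) * (1 + 2 * (a + (x + y))) = 0 := by
      simp only [hψ] at hxy
      linear_combination hxy
    have h2 := unit_cancel (isUnit_one_add_two hmax (a + (x + y))) h1
    exact sub_eq_zero.1 h2
  have hsurj := Finite.surjective_of_injective hinj
  obtain ⟨x, hx⟩ := hsurj c
  refine ⟨a + 2 * x, ?_⟩
  simp only [hψ] at hx
  rw [← hx]
  ring

lemma Sset_sub_K1 (hmax : IsLocalRing.maximalIdeal A = Ideal.span {(2 : A)})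
    {s y : A} (hs : s ∈ Sset A) (hy : y ∈ Kset A 1) : s + y ∈ Sset A := by
  obtain ⟨c, rfl⟩ := hy
  rw [pow_one]
  exact Sset_add_two hmax hs c

lemma card_Sset (hn : 1 ≤ n) (hchar : CharP A (2 ^ n))
    (hmax : IsLocalRing.maximalIdeal A = Ideal.span {(2 : A)}) :
    Nat.card A = Nat.card (Sset A) * 2 := by
  haveI : Nontrivial A := CharP.nontrivial_of_char_ne_one (R := A) (v := 2 ^ n)
    (by have : 2 ^ 1 ≤ 2 ^ n := Nat.pow_le_pow_right (by norm_num) hn; simp at this; omega)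
  have key := card_eq_card_range_mul (fun a : A => a + a ^ 2) 2 (fun a => ?_)
  · rw [key]
    have : (Set.range fun a : A => a + a ^ 2) = Sset A := by
      ext x
      constructor
      · rintro ⟨b, rfl⟩; exact ⟨b, rfl⟩
      · rintro ⟨b, rfl⟩; exact ⟨b, rfl⟩
    rw [this]
  · have hfib : {x : A | x + x ^ 2 = a + a ^ 2} = {a, -1 - a} := by
      ext x
      constructor
      · intro hx
        have hx' : x + x ^ 2 = a + a ^ 2 := hx
        have h1 : (x - a) * (x + a + 1) = 0 := by linear_combination hx'
        by_cases hmem : x - a ∈ Kset A 1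
        · have hu : IsUnit (x + a + 1) := by
            by_contra hc
            have h2 : x + a + 1 ∈ Kset A 1 := by
              by_contra hc2
              exact hc (isUnit_of_not_mem_K1 hmax hc2)
            have h3 : (1 + 2 * a : A) ∈ Kset A 1 := by
              have := Kset_sub h2 hmem
              have he : (x + a + 1) - (x - a) = 1 + 2 * a := by ring
              rwa [he] at this
            exact mem_K1_not_unit hmax h3 (isUnit_one_add_two hmax a)
          left
          exact sub_eq_zero.1 (unit_cancel hu h1)
        · have hu : IsUnit (x - a) := isUnit_of_not_mem_K1 hmax hmem
          right
          have h2 : (x + a + 1) * (x - a) = 0 := by rw [mul_comm]; exact h1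
          have h3 := unit_cancel hu h2
          show x = -1 - a
          linear_combination h3
      · rintro (rfl | rfl)
        · rfl
        · show (-1 - a) + (-1 - a) ^ 2 = a + a ^ 2
          ring
    rw [hfib]
    have hne : a ≠ -1 - a := by
      intro h
      have h1 : (1 + 2 * a : A) = 0 := by linear_combination h
      exact (isUnit_one_add_two hmax a).ne_zero h1
    rw [Nat.card_coe_set_eq, Set.ncard_pair hne]

lemma Sset_phi_surj (hmax : IsLocalRing.maximalIdeal A = Ideal.span {(2 : A)})
    {j : ℕ} (hj : 1 ≤ j) :
    ∀ t ∈ Sset A, ∃ s ∈ Sset A, s + 2 ^ j * s ^ 2 = t := by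
  have hmem : ∀ s : ↥(Sset A), (s : A) + 2 ^ j * (s : A) ^ 2 ∈ Sset A := by
    intro s
    have : (s : A) + 2 ^ j * (s : A) ^ 2 = (s : A) + 2 * (2 ^ (j - 1) * (s : A) ^ 2) := by
      rw [← mul_assoc]
      congr 2
      rw [← pow_succ']
      congr 1
      omega
    rw [this]
    exact Sset_add_two hmax s.2 _
  set F : ↥(Sset A) → ↥(Sset A) := fun s => ⟨(s : A) + 2 ^ j * (s : A) ^ 2, hmem s⟩ with hF
  have hinj : Function.Injective F := by
    intro x y hxy
    have h1 : (x : A) + 2 ^ j * (x : A) ^ 2 = (y : A) + 2 ^ j * (y : A) ^ 2 := by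
      have := congrArg (Subtype.val) hxy
      simpa [hF] using this
    have h2 : ((x : A) - (y : A)) * (1 + 2 ^ j * ((x : A) + (y : A))) = 0 := by
      linear_combination h1
    have h3 := unit_cancel (isUnit_one_add_two_pow hmax hj _) h2
    exact Subtype.ext (sub_eq_zero.1 h3)
  have hsurj := Finite.surjective_of_injective hinj
  intro t ht
  obtain ⟨s, hs⟩ := hsurj ⟨t, ht⟩
  exact ⟨(s : A), s.2, by simpa [hF] using congrArg Subtype.val hs⟩

/-- The set `1 + 2^j S` inside the unit group. -/
def Qset (A : Type) [CommRing A] (j : ℕ) : Set Aˣ :=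
  {u | ∃ s ∈ Sset A, (u : A) = 1 + 2 ^ j * s}

lemma onePlusP_coe_iff (u : Aˣ) :
    u ∈ onePlusP 2 A ↔ ∃ a : A, (u : A) = 1 + 2 * a := by
  show (∃ a : A, (u : A) = 1 + ((2 : ℕ) : A) * a) ↔ _
  norm_num

lemma image_pow_onePlusP (hmax : IsLocalRing.maximalIdeal A = Ideal.span {(2 : A)}) :
    ∀ k, 1 ≤ k →
    (fun u : Aˣ => u ^ 2 ^ k) '' (onePlusP 2 A : Set Aˣ) = Qset A (k + 1) := by
  intro k
  induction k with
  | zero => omega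
  | succ k ih =>
    intro _
    rcases Nat.eq_zero_or_pos k with rfl | hk
    · -- base case k+1 = 1 : squaring
      ext v
      constructor
      · rintro ⟨u, hu, rfl⟩
        obtain ⟨a, ha⟩ := (onePlusP_coe_iff u).1 hu
        refine ⟨a + a ^ 2, ⟨a, rfl⟩, ?_⟩
        show ((u ^ 2 : Aˣ) : A) = _
        rw [Units.val_pow_eq_pow_val, ha]
        ring
      · rintro ⟨s, ⟨a, rfl⟩, hv⟩
        have hu := isUnit_one_add_two hmax a
        refine ⟨hu.unit, (onePlusP_coe_iff hu.unit).2 ⟨a, hu.unit_spec⟩, ?_⟩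
        apply Units.ext
        show ((hu.unit ^ 2 : Aˣ) : A) = (v : A)
        rw [Units.val_pow_eq_pow_val, hu.unit_spec, hv]
        ring
    · -- inductive step
      have step : (fun u : Aˣ => u ^ 2 ^ (k + 1)) '' (onePlusP 2 A : Set Aˣ)
          = (fun u : Aˣ => u ^ 2) '' ((fun u : Aˣ => u ^ 2 ^ k) '' (onePlusP 2 A : Set Aˣ)) := by
        rw [Set.image_image]
        apply Set.image_congr
        intro u _
        rw [pow_succ, pow_mul]
      rw [step, ih hk]
      ext v
      constructor
      · rintro ⟨u, ⟨s, hs, hu⟩, rfl⟩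
        refine ⟨s + 2 ^ k * s ^ 2, ?_, ?_⟩
        · have h2 : s + 2 ^ k * s ^ 2 = s + 2 * (2 ^ (k - 1) * s ^ 2) := by
            rw [← mul_assoc]
            congr 2
            rw [← pow_succ']
            congr 1
            omega
          rw [h2]
          exact Sset_add_two hmax hs _
        · show ((u ^ 2 : Aˣ) : A) = _
          rw [Units.val_pow_eq_pow_val, hu]
          ring
      · rintro ⟨t, ht, hv⟩
        obtain ⟨s, hs, hst⟩ := Sset_phi_surj hmax hk t ht
        have hu := isUnit_one_add_two_pow hmax (j := k + 1) (by omega) s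
        refine ⟨hu.unit, ⟨s, hs, hu.unit_spec⟩, ?_⟩
        apply Units.ext
        show ((hu.unit ^ 2 : Aˣ) : A) = (v : A)
        rw [Units.val_pow_eq_pow_val, hu.unit_spec, hv, ← hst]
        ring

lemma card_Qset_large (hn : 1 ≤ n) (hchar : CharP A (2 ^ n)) {j : ℕ} (hj : n ≤ j) :
    Nat.card (Qset A j) = 1 := by
  have : Qset A j = {1} := by
    ext u
    constructor
    · rintro ⟨s, _, hu⟩
      apply Units.ext
      rw [hu, (two_pow_zero_iff hn hchar j).2 hj]
      simp
    · rintro rfl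
      exact ⟨0, ⟨0, by ring⟩, by rw [(two_pow_zero_iff hn hchar j).2 hj]; simp⟩
  rw [this]
  simp

lemma card_Qset (hn : 1 ≤ n) (hchar : CharP A (2 ^ n))
    (hmax : IsLocalRing.maximalIdeal A = Ideal.span {(2 : A)})
    {j : ℕ} (hj : 1 ≤ j) (hjn : j ≤ n - 1) :
    Nat.card (Sset A) = Nat.card (Qset A j) * Nat.card (Kset A (n - j)) := by
  have key := card_eq_card_range_mul
    (fun s : ↥(Sset A) => (isUnit_one_add_two_pow hmax hj (s : A)).unit)
    (Nat.card (Kset A (n - j))) (fun a => ?_)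
  · rw [key]
    have hrange : (Set.range fun s : ↥(Sset A) => (isUnit_one_add_two_pow hmax hj (s : A)).unit)
        = Qset A j := by
      ext u
      constructor
      · rintro ⟨s, rfl⟩
        exact ⟨(s : A), s.2, (isUnit_one_add_two_pow hmax hj (s : A)).unit_spec.symm⟩
      · rintro ⟨s, hs, hu⟩
        refine ⟨⟨s, hs⟩, ?_⟩
        apply Units.ext
        rw [(isUnit_one_add_two_pow hmax hj s).unit_spec, hu]
    rw [hrange]
  · have hfib : {x : ↥(Sset A) | (isUnit_one_add_two_pow hmax hj (x : A)).unit
        = (isUnit_one_add_two_pow hmax hj (a : A)).unit}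
        = {x : ↥(Sset A) | (x : A) - (a : A) ∈ Kset A (n - j)} := by
      ext x
      rw [Set.mem_setOf_eq, Set.mem_setOf_eq]
      rw [Units.ext_iff, (isUnit_one_add_two_pow hmax hj (x : A)).unit_spec,
        (isUnit_one_add_two_pow hmax hj (a : A)).unit_spec]
      rw [← ann_pow hn hchar hmax (by omega : j ≤ n), mul_sub]
      constructor
      · intro h; linear_combination h
      · intro h; linear_combination h
    rw [hfib]
    apply Nat.card_congr
    refine ⟨fun x => ⟨(x : ↥(Sset A)).1 - (a : A), x.2⟩,
      fun y => ⟨⟨(a : A) + (y : A), Sset_sub_K1 hmax a.2 (Kset_mono (by omega : 1 ≤ n - j) y.2)⟩, ?_⟩,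
      fun x => ?_, fun y => ?_⟩
    · show ((a : A) + (y : A)) - (a : A) ∈ Kset A (n - j)
      rw [add_sub_cancel_left]
      exact y.2
    · apply Subtype.ext; apply Subtype.ext
      show (a : A) + ((x : ↥(Sset A)).1 - (a : A)) = _
      ring
    · apply Subtype.ext
      show ((a : A) + (y : A)) - (a : A) = (y : A)
      ring

lemma card_onePlusP (hn : 1 ≤ n) (hchar : CharP A (2 ^ n))
    (hmax : IsLocalRing.maximalIdeal A = Ideal.span {(2 : A)}) :
    Nat.card A = Nat.card (onePlusP 2 A) * Nat.card (Kset A (n - 1)) := by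
  have key := card_eq_card_range_mul
    (fun a : A => (isUnit_one_add_two hmax a).unit)
    (Nat.card (Kset A (n - 1))) (fun a => ?_)
  · rw [key]
    have hrange : (Set.range fun a : A => (isUnit_one_add_two hmax a).unit)
        = (onePlusP 2 A : Set Aˣ) := by
      ext u
      constructor
      · rintro ⟨a, rfl⟩
        exact (onePlusP_coe_iff _).2 ⟨a, (isUnit_one_add_two hmax a).unit_spec.symm⟩
      · intro hu
        obtain ⟨a, ha⟩ := (onePlusP_coe_iff u).1 hu
        refine ⟨a, ?_⟩
        apply Units.ext
        rw [(isUnit_one_add_two hmax a).unit_spec, ha]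
    rw [hrange]
    rfl
  · have hfib : {x : A | (isUnit_one_add_two hmax x).unit = (isUnit_one_add_two hmax a).unit}
        = {x : A | x - a ∈ Kset A (n - 1)} := by
      ext x
      rw [Set.mem_setOf_eq, Set.mem_setOf_eq]
      rw [Units.ext_iff, (isUnit_one_add_two hmax x).unit_spec,
        (isUnit_one_add_two hmax a).unit_spec]
      have := ann_pow (k := 1) hn hchar hmax (by omega) (x - a)
      rw [pow_one] at this
      rw [← this, mul_sub]
      constructor
      · intro h; linear_combination h
      · intro h; linear_combination h
    rw [hfib, card_coset]

lemma card_range_pow_subgroup {G : Type*} [Group G] (H : Subgroup G) (m : ℕ) :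
    Nat.card (Set.range fun x : ↥H => x ^ m)
      = Nat.card ((fun u : G => u ^ m) '' (H : Set G)) := by
  apply Nat.card_congr
  apply Equiv.ofBijective (f := fun y => ⟨((y : ↥H) : G), by
    obtain ⟨x, hx⟩ := y.2
    exact ⟨(x : G), x.2, by rw [← hx]; rfl⟩⟩)
  constructor
  · intro y1 y2 h
    have := congrArg Subtype.val h
    exact Subtype.ext (Subtype.ext this)
  · rintro ⟨z, u, hu, rfl⟩
    exact ⟨⟨(⟨u, hu⟩ : ↥H) ^ m, ⟨⟨u, hu⟩, rfl⟩⟩, rfl⟩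

lemma card_onePlusP' (hn : 3 ≤ n) (hr : 1 ≤ r) (hchar : CharP A (2 ^ n))
    (hmax : IsLocalRing.maximalIdeal A = Ideal.span {(2 : A)})
    (hres : Nat.card (IsLocalRing.ResidueField A) = 2 ^ r) :
    Nat.card (onePlusP 2 A) = 2 ^ ((n - 1) * r) := by
  have h1 := card_onePlusP (by omega : 1 ≤ n) hchar hmax
  rw [cardA (by omega) hchar hmax hres,
    card_Kset (by omega) hchar hmax hres 1 (by omega)] at h1
  have hexp : n * r = (n - 1) * r + 1 * r := by
    rw [← add_mul]; congr 1; omega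
  rw [hexp, pow_add] at h1
  exact (Nat.eq_of_mul_eq_mul_right (by positivity) h1.symm)

lemma Ginv (hn : 3 ≤ n) (hr : 1 ≤ r) (hchar : CharP A (2 ^ n))
    (hmax : IsLocalRing.maximalIdeal A = Ideal.span {(2 : A)})
    (hres : Nat.card (IsLocalRing.ResidueField A) = 2 ^ r) :
    ∀ k, 1 ≤ k → Nat.card (Set.range fun x : ↥(onePlusP 2 A) => x ^ 2 ^ k)
      = 2 ^ ((n - 1 - k) * r - 1) := by
  intro k hk
  rw [card_range_pow_subgroup, image_pow_onePlusP hmax k hk]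
  rcases le_or_gt n (k + 1) with hcase | hcase
  · rw [card_Qset_large (by omega : 1 ≤ n) hchar hcase]
    have : n - 1 - k = 0 := by omega
    rw [this]
    simp
  · -- k + 1 ≤ n - 1
    have hj1 : 1 ≤ k + 1 := by omega
    have hjn : k + 1 ≤ n - 1 := by omega
    have h1 := card_Qset (by omega : 1 ≤ n) hchar hmax hj1 hjn
    have h2 := card_Sset (by omega : 1 ≤ n) hchar hmax
    rw [cardA (by omega) hchar hmax hres] at h2
    rw [card_Kset (by omega) hchar hmax hres (k + 1) (by omega)] at h1
    -- h2 : 2 ^ (n*r) = card S * 2 ; h1 : card S = cardQ * 2^((k+1)*r)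
    rw [h1] at h2
    -- 2^(n*r) = cardQ * 2^((k+1)*r) * 2
    have key : Nat.card (Qset A (k + 1)) * (2 ^ ((k + 1) * r) * 2)
        = 2 ^ ((n - 1 - k) * r - 1) * (2 ^ ((k + 1) * r) * 2) := by
      rw [← mul_assoc, ← h2]
      rw [← pow_succ, ← pow_add]
      congr 1
      have e1 : (n - 1 - k) * r + (k + 1) * r = n * r := by
        rw [← add_mul]; congr 1; omega
      have e2 : 1 ≤ (n - 1 - k) * r := Nat.mul_pos (by omega) (by omega)
      omega
    exact Nat.eq_of_mul_eq_mul_right (by positivity) key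

lemma card_range_pow_prod {G H : Type*} [Monoid G] [Monoid H] (m : ℕ) :
    Nat.card (Set.range fun x : G × H => x ^ m)
      = Nat.card (Set.range fun x : G => x ^ m) * Nat.card (Set.range fun x : H => x ^ m) := by
  have h1 : (fun x : G × H => x ^ m)
      = Prod.map (fun x : G => x ^ m) (fun x : H => x ^ m) := rfl
  rw [h1, Set.range_prodMap]
  rw [Nat.card_congr (Equiv.Set.prod _ _), Nat.card_prod]

end GR

lemma Hinv (n r : ℕ) (hn : 3 ≤ n) (hr : 1 ≤ r) (k : ℕ) :
    Nat.card (Set.range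
        fun x : Multiplicative (ZMod 2 × ZMod (2 ^ (n - 2)) × (Fin (r - 1) → ZMod (2 ^ (n - 1)))) =>
          x ^ 2 ^ k)
      = 2 ^ ((1 - k) + ((n - 2) - k) + (r - 1) * ((n - 1) - k)) := by
  let e2 : Multiplicative (ZMod (2 ^ (n - 2)) × (Fin (r - 1) → ZMod (2 ^ (n - 1)))) ≃*
      Multiplicative (ZMod (2 ^ (n - 2)))
        × ((_ : Fin (r - 1)) → Multiplicative (ZMod (2 ^ (n - 1)))) :=
    MulEquiv.trans (MulEquiv.prodMultiplicative _ _)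
      (MulEquiv.prodCongr (MulEquiv.refl (Multiplicative (ZMod (2 ^ (n - 2)))))
        (MulEquiv.piMultiplicative (fun _ : Fin (r - 1) => ZMod (2 ^ (n - 1)))))
  let eH : Multiplicative (ZMod 2 × ZMod (2 ^ (n - 2)) × (Fin (r - 1) → ZMod (2 ^ (n - 1)))) ≃*
      Multiplicative (ZMod 2) × (Multiplicative (ZMod (2 ^ (n - 2)))
        × ((_ : Fin (r - 1)) → Multiplicative (ZMod (2 ^ (n - 1))))) :=
    MulEquiv.trans (MulEquiv.prodMultiplicative _ _)
      (MulEquiv.prodCongr (MulEquiv.refl (Multiplicative (ZMod 2))) e2)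
  rw [card_range_pow_congr eH (2 ^ k), card_range_pow_prod, card_range_pow_prod]
  have c1 : Nat.card (Set.range fun x : Multiplicative (ZMod 2) => x ^ 2 ^ k)
      = 2 ^ (1 - k) := by
    rw [card_range_pow_multiplicative_zmod 2 _ (by norm_num)]
    have h := two_pow_div_gcd 1 k
    simpa using h
  have c2 : Nat.card (Set.range fun x : Multiplicative (ZMod (2 ^ (n - 2))) => x ^ 2 ^ k)
      = 2 ^ ((n - 2) - k) := by
    rw [card_range_pow_multiplicative_zmod _ _ (by positivity), two_pow_div_gcd]
  have c3 : Nat.card (Set.range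
      fun x : ((_ : Fin (r - 1)) → Multiplicative (ZMod (2 ^ (n - 1)))) => x ^ 2 ^ k)
      = 2 ^ ((r - 1) * ((n - 1) - k)) := by
    rw [card_range_pow_pi (fun _ : Fin (r - 1) => n - 1) k]
    congr 1
    rw [Finset.sum_const, Finset.card_univ, Fintype.card_fin, smul_eq_mul]
  rw [c1, c2, c3, ← pow_add, ← pow_add, add_assoc]

/-- **Structure of `1 + 2A` for `p = 2`, `n ≥ 3`.** If `A = GR(2^n, r)` is a Galois ring
with `n ≥ 3`, then the multiplicative group `1 + 2A` is isomorphic to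
`ℤ/2ℤ × ℤ/2^(n-2)ℤ × (ℤ/2^(n-1)ℤ)^(r-1)`. -/
theorem onePlusP_structure_two (n r : ℕ) (hn : 3 ≤ n) (hr : 0 < r)
    (A : Type) [CommRing A] [Fintype A] [IsLocalRing A]
    (hchar : CharP A (2 ^ n))
    (hmax : IsLocalRing.maximalIdeal A = Ideal.span {(2 : A)})
    (hres : Nat.card (IsLocalRing.ResidueField A) = 2 ^ r) :
    Nonempty (onePlusP 2 A ≃*
      Multiplicative (ZMod 2 × ZMod (2 ^ (n - 2)) × (Fin (r - 1) → ZMod (2 ^ (n - 1))))) := by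
  classical
  haveI : NeZero (2 ^ (n - 2)) := ⟨by positivity⟩
  haveI : NeZero (2 ^ (n - 1)) := ⟨by positivity⟩
  apply master_two_group (m := (n - 1) * r)
  · exact card_onePlusP' hn hr hchar hmax hres
  · intro k
    rcases Nat.eq_zero_or_pos k with rfl | hk
    · have hG0 : (Set.range fun x : ↥(onePlusP 2 A) => x ^ 2 ^ 0) = Set.univ := by
        ext x; simpa using ⟨x, by simp⟩
      rw [hG0, Nat.card_univ, card_onePlusP' hn hr hchar hmax hres, Hinv n r hn hr 0]
      refine congrArg (fun e => 2 ^ e) ?_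
      have e3 : (r - 1) * ((n - 1) - 0) = (n - 1) * r - (n - 1) := by
        rw [Nat.sub_mul, one_mul, Nat.sub_zero, mul_comm]
      rw [e3]
      have hx : n - 1 ≤ (n - 1) * r := Nat.le_mul_of_pos_right _ (by omega)
      omega
    · rw [Ginv hn hr hchar hmax hres k hk, Hinv n r hn hr k]
      refine congrArg (fun e => 2 ^ e) ?_
      rcases Nat.eq_zero_or_pos (n - 1 - k) with h0 | h0
      · have h1 : n - 2 - k = 0 := by omega
        have h2 : 1 - k = 0 := by omega
        rw [show (n - 1) - k = n - 1 - k from rfl, h0, h1, h2]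
        simp
      · have e3 : (r - 1) * ((n - 1) - k) = (n - 1 - k) * r - (n - 1 - k) := by
          rw [Nat.sub_mul, one_mul, mul_comm]
        rw [e3]
        have hx : n - 1 - k ≤ (n - 1 - k) * r := Nat.le_mul_of_pos_right _ (by omega)
        set x := (n - 1 - k) * r with hxdef
        omega
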